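/- The equivalence relation R is ergodic with respect to μ: if A ⊆ X is measurable and R-invariant (i.e. whenever x ∈ A and x R y, then y ∈ A), then μ(A) = 0 or μ(X ∖ A) = 0. -/

import Mathlib

open MeasureTheory ENNReal Filter

/-- The coordinate space: Lean index `n` is paper index `n+1`, so this is
`X_{n+1} = {0,1,…,5^{n+1}}`. -/
abbrev Xc (n : ℕ) : Type := Fin (5 ^ (n + 1) + 1)

/-- The weight of a point of `X_{n+1}`: `μ_{n+1}(0) = 1/2`, `μ_{n+1}(i) = 1/(2·5^{n+1})`
for `i ≠ 0`. -/
noncomputable def w (n : ℕ) (a : Xc n) : ℝ≥0∞ :=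
  if a = 0 then 1 / 2 else 1 / (2 * 5 ^ (n + 1))

/-- The full product space `X = ∏_{n ≥ 1} X_n`. -/
abbrev XX : Type := (n : ℕ) → Xc n

/-- The cylinder `Z_A` determined by a set `A` of configurations on a finite set `Γ`
of coordinates. -/
def cylSet (Γ : Finset ℕ) (A : Set ((i : Γ) → Xc i)) : Set XX :=
  {x | (fun i : Γ => x i) ∈ A}

/-- The point cylinder `Z_u`. -/
def cylPt (Γ : Finset ℕ) (u : (i : Γ) → Xc i) : Set XX := cylSet Γ {u}

/-- `μ` is the product measure `⊗ μ_n` iff every point cylinder gets the product of the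
weights of its coordinates. (This property determines the product measure uniquely.) -/
def IsProductMeasure (μ : Measure XX) : Prop :=
  ∀ (Γ : Finset ℕ) (u : (i : Γ) → Xc i), μ (cylPt Γ u) = ∏ i : Γ, w i (u i)

/-- `π_{n+1} : X_{n+1} → {0,1}`, sending `0` to `0` and everything else to `1`. -/
def par (n : ℕ) (a : Xc n) : ℕ := if a = 0 then 0 else 1

/-- The equivalence relation `R`: `x R y` iff for some `n ≥ 1` the coordinates of `x` and `y`
beyond the `n`-th agree, and the parities of `∑_{i=1}^{n} π_i(x_i)` and
`∑_{i=1}^{n} π_i(y_i)` coincide. -/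
def Rrel (x y : XX) : Prop :=
  ∃ n : ℕ, 1 ≤ n ∧ (∀ i, n ≤ i → x i = y i) ∧
    (∑ i ∈ Finset.range n, par i (x i)) % 2 = (∑ i ∈ Finset.range n, par i (y i)) % 2

namespace S14

/-- global-configuration point cylinder -/
def Zc (Γ : Finset ℕ) (x : XX) : Set XX := cylPt Γ (fun i => x i)

lemma mem_Zc {Γ : Finset ℕ} {x y : XX} : y ∈ Zc Γ x ↔ ∀ i ∈ Γ, y i = x i := by
  simp only [Zc, cylPt, cylSet, Set.mem_setOf_eq, Set.mem_singleton_iff, funext_iff]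
  exact ⟨fun h i hi => h ⟨i, hi⟩, fun h i => h i i.2⟩

lemma Zc_congr {Γ : Finset ℕ} {x y : XX} (h : ∀ i ∈ Γ, x i = y i) : Zc Γ x = Zc Γ y := by
  ext z; simp only [mem_Zc]
  exact ⟨fun hz i hi => (hz i hi).trans (h i hi), fun hz i hi => (hz i hi).trans (h i hi).symm⟩

/-- extend a local configuration to a global one -/
def extc (Γ : Finset ℕ) (u : (i : Γ) → Xc i) : XX := fun i => if h : i ∈ Γ then u ⟨i, h⟩ else 0

lemma extc_apply (Γ : Finset ℕ) (u : (i : Γ) → Xc i) (i : Γ) : extc Γ u i = u i := by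
  simp [extc, i.2]

lemma cylPt_eq_Zc (Γ : Finset ℕ) (u : (i : Γ) → Xc i) : cylPt Γ u = Zc Γ (extc Γ u) := by
  rw [Zc, show (fun i : Γ => extc Γ u i) = u from funext fun i => extc_apply Γ u i]

lemma measurableSet_cylSet (Γ : Finset ℕ) (A : Set ((i : Γ) → Xc i)) :
    MeasurableSet (cylSet Γ A) := by
  have : cylSet Γ A = (fun (x : XX) (i : Γ) => x i) ⁻¹' A := rfl
  rw [this]
  exact (measurable_pi_lambda _ fun i => measurable_pi_apply _)
    (Set.Finite.measurableSet (Set.toFinite A))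

lemma measurableSet_Zc (Γ : Finset ℕ) (x : XX) : MeasurableSet (Zc Γ x) :=
  measurableSet_cylSet _ _

lemma den_ne_top (n : ℕ) : (2 * 5 ^ (n + 1) : ℝ≥0∞) ≠ ⊤ :=
  ENNReal.mul_ne_top (by simp) (ENNReal.pow_ne_top (by simp))

lemma w_ne_zero (n : ℕ) (a : Xc n) : w n a ≠ 0 := by
  unfold w; split
  · simp
  · simp [ENNReal.div_eq_zero_iff, den_ne_top n]

lemma w_ne_top (n : ℕ) (a : Xc n) : w n a ≠ ⊤ := by
  unfold w; split
  · simp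
  · exact (ENNReal.div_lt_top (by simp) (mul_ne_zero (by norm_num) (pow_ne_zero _ (by norm_num)))).ne

variable {μ : Measure XX}

lemma mu_Zc (hμ : IsProductMeasure μ) (Γ : Finset ℕ) (x : XX) : μ (Zc Γ x) = ∏ i ∈ Γ, w i (x i) := by
  rw [Zc, hμ Γ]
  exact Finset.prod_coe_sort Γ (fun i => w i (x i))

lemma mu_Zc_ne_zero (hμ : IsProductMeasure μ) (Γ : Finset ℕ) (x : XX) : μ (Zc Γ x) ≠ 0 := by
  rw [mu_Zc hμ]
  exact Finset.prod_ne_zero_iff.2 fun i _ => w_ne_zero i (x i)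

lemma mu_Zc_ne_top (hμ : IsProductMeasure μ) (Γ : Finset ℕ) (x : XX) : μ (Zc Γ x) ≠ ⊤ := by
  rw [mu_Zc hμ]
  exact ENNReal.prod_ne_top fun i _ => w_ne_top i (x i)

lemma mu_univ (hμ : IsProductMeasure μ) : μ Set.univ = 1 := by
  have h := hμ ∅ (fun i => absurd i.2 (Finset.notMem_empty _))
  simp only [Finset.univ_eq_empty, Finset.prod_empty] at h
  rw [← h]
  congr 1
  ext x
  simp only [Set.mem_univ, true_iff]
  show (fun i : ((∅ : Finset ℕ) : Type) => x i) ∈ ({_} : Set _)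
  have he : (fun i : ((∅ : Finset ℕ) : Type) => x i)
      = (fun i => absurd i.2 (Finset.notMem_empty _)) :=
    funext fun i => absurd i.2 (Finset.notMem_empty _)
  simp [he]

lemma isProb (hμ : IsProductMeasure μ) : IsProbabilityMeasure μ := ⟨mu_univ hμ⟩

lemma Zc_union (Γ₁ Γ₂ : Finset ℕ) (x : XX) : Zc (Γ₁ ∪ Γ₂) x = Zc Γ₁ x ∩ Zc Γ₂ x := by
  ext z
  simp only [mem_Zc, Set.mem_inter_iff, Finset.mem_union]
  constructor
  · intro h; exact ⟨fun i hi => h i (Or.inl hi), fun i hi => h i (Or.inr hi)⟩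
  · rintro ⟨h1, h2⟩ i (hi | hi); exacts [h1 i hi, h2 i hi]

lemma mu_Zc_inter (hμ : IsProductMeasure μ) (Γ₁ Γ₂ : Finset ℕ) (hd : Disjoint Γ₁ Γ₂) (x : XX) :
    μ (Zc Γ₁ x ∩ Zc Γ₂ x) = μ (Zc Γ₁ x) * μ (Zc Γ₂ x) := by
  rw [← Zc_union, mu_Zc hμ, mu_Zc hμ, mu_Zc hμ, Finset.prod_union hd]


lemma disjoint_cylPt {Γ : Finset ℕ} {c c' : (i : Γ) → Xc i} (h : c ≠ c') :
    Disjoint (cylPt Γ c) (cylPt Γ c') := by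
  rw [Set.disjoint_left]
  intro z hz hz'
  exact h ((Set.mem_singleton_iff.1 hz).symm.trans (Set.mem_singleton_iff.1 hz'))

lemma cylSet_eq_biUnion (Γ : Finset ℕ) (S : Set ((i : Γ) → Xc i)) :
    cylSet Γ S = ⋃ c ∈ (Set.toFinite S).toFinset, cylPt Γ c := by
  ext z
  simp only [cylSet, Set.mem_setOf_eq, Set.mem_iUnion, Set.Finite.mem_toFinset, cylPt,
    Set.mem_singleton_iff]
  constructor
  · intro h; exact ⟨_, h, rfl⟩
  · rintro ⟨c, hc, h⟩; rw [show (fun i : Γ => z i) ∈ S ↔ True from iff_of_eq (by rw [h]; simp [hc])]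
    trivial

lemma iUnion_cylPt (Γ : Finset ℕ) : ⋃ c : (i : Γ) → Xc i, cylPt Γ c = Set.univ := by
  ext z
  simp only [Set.mem_iUnion, Set.mem_univ, iff_true]
  exact ⟨fun i => z i, rfl⟩

/-- decomposition of the measure of any measurable set over the point cylinders on `Γ`. -/
lemma measure_eq_sum_cyl (μ : Measure XX) (Γ : Finset ℕ) {S : Set XX} (hS : MeasurableSet S) :
    μ S = ∑ c : (i : Γ) → Xc i, μ (S ∩ cylPt Γ c) := by
  have : S = ⋃ c : (i : Γ) → Xc i, S ∩ cylPt Γ c := by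
    rw [← Set.inter_iUnion, iUnion_cylPt, Set.inter_univ]
  rw [← tsum_fintype (L := SummationFilter.unconditional _)]
  conv_lhs => rw [this]
  exact measure_iUnion
    (fun c c' h => Set.disjoint_of_subset Set.inter_subset_right Set.inter_subset_right
      (disjoint_cylPt h))
    (fun c => hS.inter (measurableSet_cylSet Γ {c}))

/-- the replacement map -/
def rmap (n : ℕ) (y : XX) : XX → XX := fun z i => if i < n then y i else z i

lemma measurable_rmap (n : ℕ) (y : XX) : Measurable (rmap n y) := by
  apply measurable_pi_lambda
  intro i
  by_cases h : i < n
  · simp only [rmap, if_pos h]; exact measurable_const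
  · simp only [rmap, if_neg h]; exact measurable_pi_apply _

lemma rmap_preimage_cylPt (n : ℕ) (y : XX) (Γ : Finset ℕ) (c : (i : Γ) → Xc i) :
    rmap n y ⁻¹' cylPt Γ c =
      if ∀ i ∈ Γ, i < n → y i = extc Γ c i
      then Zc (Γ.filter (fun i => ¬ i < n)) (extc Γ c) else ∅ := by
  ext z
  have hmem : z ∈ rmap n y ⁻¹' cylPt Γ c ↔
      ∀ i ∈ Γ, (if i < n then y i else z i) = extc Γ c i := by
    rw [Set.mem_preimage, cylPt_eq_Zc, mem_Zc]
    exact Iff.rfl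
  split
  · next h =>
    rw [hmem, mem_Zc]
    constructor
    · intro hz i hi
      rw [Finset.mem_filter] at hi
      have := hz i hi.1
      rwa [if_neg hi.2] at this
    · intro hz i hi
      by_cases hin : i < n
      · rw [if_pos hin]; exact h i hi hin
      · rw [if_neg hin]; exact hz i (Finset.mem_filter.2 ⟨hi, hin⟩)
  · next h =>
    simp only [Set.mem_empty_iff_false, iff_false]
    rw [hmem]
    push_neg at h
    obtain ⟨i, hi, hin, hne⟩ := h
    intro hz
    have := hz i hi
    rw [if_pos hin] at this
    exact hne this

/-- key independence computation for point cylinders -/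
lemma core_eq (hμ : IsProductMeasure μ) (n : ℕ) (x y : XX) (Γ : Finset ℕ)
    (c : (i : Γ) → Xc i) :
    μ (rmap n y ⁻¹' cylPt Γ c ∩ Zc (Finset.range n) x) * μ (Zc (Finset.range n) y)
      = μ (rmap n y ⁻¹' cylPt Γ c ∩ Zc (Finset.range n) y) * μ (Zc (Finset.range n) x) := by
  rw [rmap_preimage_cylPt]
  split
  · next h =>
    set Γ' := Γ.filter (fun i => ¬ i < n) with hΓ'
    have hdisj : Disjoint Γ' (Finset.range n) := by
      rw [Finset.disjoint_left]
      intro i hi hi'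
      exact (Finset.mem_filter.1 hi).2 (Finset.mem_range.1 hi')
    have key : ∀ t : XX, μ (Zc Γ' (extc Γ c) ∩ Zc (Finset.range n) t)
        = μ (Zc Γ' (extc Γ c)) * μ (Zc (Finset.range n) t) := by
      intro t
      set z : XX := fun i => if i < n then t i else extc Γ c i with hz
      have h1 : Zc Γ' (extc Γ c) = Zc Γ' z :=
        Zc_congr fun i hi => by simp [hz, if_neg (Finset.mem_filter.1 hi).2]
      have h2 : Zc (Finset.range n) t = Zc (Finset.range n) z :=
        Zc_congr fun i hi => by simp [hz, if_pos (Finset.mem_range.1 hi)]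
      rw [h1, h2, mu_Zc_inter hμ _ _ hdisj z, ← h1, ← h2]
    rw [key x, key y]
    ring
  · simp

/-- the transfer identity for arbitrary measurable sets -/
lemma transfer (hμ : IsProductMeasure μ) (n : ℕ) (x y : XX) {C : Set XX}
    (hC : MeasurableSet C) :
    μ (rmap n y ⁻¹' C ∩ Zc (Finset.range n) x) * μ (Zc (Finset.range n) y)
      = μ (rmap n y ⁻¹' C ∩ Zc (Finset.range n) y) * μ (Zc (Finset.range n) x) := by
  haveI : IsProbabilityMeasure μ := isProb hμ
  set R := Finset.range n
  set ν₁ : Measure XX := μ (Zc R y) • (μ.restrict (Zc R x)).map (rmap n y) with hν₁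
  set ν₂ : Measure XX := μ (Zc R x) • (μ.restrict (Zc R y)).map (rmap n y) with hν₂
  have happly : ∀ (t : XX) (D : Set XX), MeasurableSet D →
      ((μ.restrict (Zc R t)).map (rmap n y)) D = μ (rmap n y ⁻¹' D ∩ Zc R t) := by
    intro t D hD
    rw [Measure.map_apply (measurable_rmap n y) hD,
      Measure.restrict_apply (hD.preimage (measurable_rmap n y))]
  haveI hfin : IsFiniteMeasure ν₁ := by
    constructor
    rw [hν₁, Measure.smul_apply, happly x _ MeasurableSet.univ, smul_eq_mul]
    exact ENNReal.mul_lt_top (mu_Zc_ne_top hμ R y).lt_top (measure_lt_top μ _)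
  have hext : ν₁ = ν₂ := by
    refine ext_of_generate_finite (measurableCylinders Xc)
      generateFrom_measurableCylinders.symm isPiSystem_measurableCylinders ?_ ?_
    · intro s hs
      obtain ⟨Γ, S, hmS, rfl⟩ := (mem_measurableCylinders s).1 hs
      have hcyl : cylinder Γ S = cylSet Γ S := rfl
      have hmeas : MeasurableSet (cylinder Γ S) := hcyl ▸ measurableSet_cylSet Γ S
      rw [hν₁, hν₂, Measure.smul_apply, Measure.smul_apply,
        happly x _ hmeas, happly y _ hmeas, smul_eq_mul, smul_eq_mul]
      rw [hcyl, cylSet_eq_biUnion]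
      rw [Set.preimage_iUnion₂]
      have hrw : ∀ t : XX,
          μ ((⋃ c ∈ (Set.toFinite S).toFinset, rmap n y ⁻¹' cylPt Γ c) ∩ Zc R t)
          = ∑ c ∈ (Set.toFinite S).toFinset, μ (rmap n y ⁻¹' cylPt Γ c ∩ Zc R t) := by
        intro t
        rw [Set.iUnion₂_inter]
        refine measure_biUnion_finset ?_ ?_
        · intro c hc c' hc' hne
          exact Set.disjoint_of_subset Set.inter_subset_left Set.inter_subset_left
            ((disjoint_cylPt hne).preimage _)
        · intro c hc
          exact (((measurableSet_cylSet Γ {c}).preimage (measurable_rmap n y)).inter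
            (measurableSet_Zc R t))
      rw [hrw x, hrw y, Finset.mul_sum, Finset.mul_sum]
      exact Finset.sum_congr rfl fun c _ => by
        rw [mul_comm, core_eq hμ n x y Γ c, mul_comm]
    · rw [hν₁, hν₂, Measure.smul_apply, Measure.smul_apply,
        happly x _ MeasurableSet.univ, happly y _ MeasurableSet.univ]
      simp only [Set.preimage_univ, Set.univ_inter, smul_eq_mul]
      ring
  have h1 := congrArg (fun ν : Measure XX => ν C) hext
  simp only [hν₁, hν₂, Measure.smul_apply, smul_eq_mul] at h1
  rw [happly x _ hC, happly y _ hC] at h1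
  rw [mul_comm (μ (rmap n y ⁻¹' C ∩ Zc R x))]
  rw [h1]
  ring


/-- parity sum of the first `n` coordinates -/
def pS (n : ℕ) (x : XX) : ℕ := (∑ i ∈ Finset.range n, par i (x i)) % 2

/-- Key inequality: invariance transfers density between same-parity cylinders. -/
lemma KI (hμ : IsProductMeasure μ) {A : Set XX} (hA : MeasurableSet A)
    (hinv : ∀ x ∈ A, ∀ y : XX, Rrel x y → y ∈ A)
    {n : ℕ} (hn : 1 ≤ n) {x y : XX} (hp : pS n x = pS n y) :
    μ (A ∩ Zc (Finset.range n) x) * μ (Zc (Finset.range n) y)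
      ≤ μ (A ∩ Zc (Finset.range n) y) * μ (Zc (Finset.range n) x) := by
  have hsub : A ∩ Zc (Finset.range n) x ⊆ rmap n y ⁻¹' A ∩ Zc (Finset.range n) x := by
    rintro z ⟨hzA, hzx⟩
    refine ⟨?_, hzx⟩
    rw [mem_Zc] at hzx
    refine hinv z hzA _ ⟨n, hn, fun i hi => ?_, ?_⟩
    · simp [rmap, Nat.not_lt.2 hi]
    · have h1 : ∀ i ∈ Finset.range n, par i (z i) = par i (x i) := fun i hi => by
        rw [hzx i hi]
      have h2 : ∀ i ∈ Finset.range n, par i (rmap n y z i) = par i (y i) := fun i hi => by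
        rw [show rmap n y z i = y i from if_pos (Finset.mem_range.1 hi)]
      rw [Finset.sum_congr rfl h1, Finset.sum_congr rfl h2]
      exact hp
  have heq : rmap n y ⁻¹' A ∩ Zc (Finset.range n) y = A ∩ Zc (Finset.range n) y := by
    ext z
    simp only [Set.mem_inter_iff, Set.mem_preimage, and_congr_left_iff]
    intro hz
    rw [mem_Zc] at hz
    have : rmap n y z = z := funext fun i => by
      by_cases h : i < n
      · exact (if_pos h).trans (hz i (Finset.mem_range.2 h)).symm
      · exact if_neg h
    rw [this]
  calc μ (A ∩ Zc (Finset.range n) x) * μ (Zc (Finset.range n) y)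
      ≤ μ (rmap n y ⁻¹' A ∩ Zc (Finset.range n) x) * μ (Zc (Finset.range n) y) :=
        mul_le_mul_left (measure_mono hsub) _
    _ = μ (rmap n y ⁻¹' A ∩ Zc (Finset.range n) y) * μ (Zc (Finset.range n) x) :=
        transfer hμ n x y hA
    _ = μ (A ∩ Zc (Finset.range n) y) * μ (Zc (Finset.range n) x) := by rw [heq]

/-- decomposition of a level-`n` cylinder along the `n`-th coordinate -/
lemma Zc_succ_decomp (μ : Measure XX) (n : ℕ) (x : XX) {S : Set XX} (hS : MeasurableSet S) :
    μ (S ∩ Zc (Finset.range n) x)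
      = ∑ a : Xc n, μ (S ∩ Zc (Finset.range (n+1)) (Function.update x n a)) := by
  have hU : Zc (Finset.range n) x
      = ⋃ a : Xc n, Zc (Finset.range (n+1)) (Function.update x n a) := by
    ext z
    simp only [Set.mem_iUnion, mem_Zc]
    constructor
    · intro h
      refine ⟨z n, fun i hi => ?_⟩
      rcases Nat.lt_succ_iff_lt_or_eq.1 (Finset.mem_range.1 hi) with h' | rfl
      · rw [Function.update_of_ne h'.ne, h i (Finset.mem_range.2 h')]
      · rw [Function.update_self]
    · rintro ⟨a, h⟩ i hi
      have h' := h i (Finset.mem_range.2 ((Finset.mem_range.1 hi).trans n.lt_succ_self))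
      rwa [Function.update_of_ne (Finset.mem_range.1 hi).ne] at h'
  rw [← tsum_fintype (L := SummationFilter.unconditional _)]
  conv_lhs => rw [hU, Set.inter_iUnion]
  refine measure_iUnion (fun a b hab => ?_) fun a => hS.inter (measurableSet_Zc _ _)
  refine Set.disjoint_of_subset Set.inter_subset_right Set.inter_subset_right ?_
  rw [Set.disjoint_left]
  intro z hz hz'
  rw [mem_Zc] at hz hz'
  have hn : n ∈ Finset.range (n+1) := Finset.mem_range.2 n.lt_succ_self
  have := (hz n hn).symm.trans (hz' n hn)
  rw [Function.update_self, Function.update_self] at this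
  exact hab this

lemma mu_Zc_succ (hμ : IsProductMeasure μ) (n : ℕ) (x : XX) (a : Xc n) :
    μ (Zc (Finset.range (n+1)) (Function.update x n a))
      = μ (Zc (Finset.range n) x) * w n a := by
  rw [mu_Zc hμ, mu_Zc hμ, Finset.prod_range_succ, Function.update_self]
  congr 1
  exact Finset.prod_congr rfl fun i hi => by
    rw [Function.update_of_ne (Finset.mem_range.1 hi).ne]

lemma pS_succ (n : ℕ) (x : XX) (a : Xc n) :
    pS (n+1) (Function.update x n a) = (pS n x + par n a) % 2 := by
  unfold pS
  rw [Finset.sum_range_succ, Function.update_self,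
    Finset.sum_congr rfl fun i hi => by
      rw [Function.update_of_ne (Finset.mem_range.1 hi).ne]]
  omega

/-- one-step leveling: density can be preserved when refining one coordinate -/
lemma level_step (hμ : IsProductMeasure μ) {D : Set XX} (hD : MeasurableSet D) {ε : ℝ≥0∞}
    {n : ℕ} {x : XX} (h : μ (D ∩ Zc (Finset.range n) x) ≤ ε * μ (Zc (Finset.range n) x)) :
    ∃ a : Xc n, μ (D ∩ Zc (Finset.range (n+1)) (Function.update x n a))
      ≤ ε * μ (Zc (Finset.range (n+1)) (Function.update x n a)) := by
  by_contra hcon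
  push_neg at hcon
  have hlt : ε * μ (Zc (Finset.range n) x) < μ (D ∩ Zc (Finset.range n) x) := by
    have e1 : μ (D ∩ Zc (Finset.range n) x)
        = ∑ a : Xc n, μ (D ∩ Zc (Finset.range (n+1)) (Function.update x n a)) :=
      Zc_succ_decomp μ n x hD
    have e2 : ε * μ (Zc (Finset.range n) x)
        = ∑ a : Xc n, ε * μ (Zc (Finset.range (n+1)) (Function.update x n a)) := by
      rw [← Finset.mul_sum]
      congr 1
      have := Zc_succ_decomp μ n x (S := Set.univ) MeasurableSet.univ
      simpa only [Set.univ_inter] using this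
    rw [e1, e2]
    exact ENNReal.sum_lt_sum_of_nonempty Finset.univ_nonempty fun a _ => hcon a
  exact absurd h (not_le.2 hlt)


lemma sum_w_parity (n : ℕ) (q : ℕ) (hq : q < 2) :
    ∑ a ∈ Finset.univ.filter (fun a : Xc n => par n a = q), w n a = 1/2 := by
  interval_cases q
  · have hf : Finset.univ.filter (fun a : Xc n => par n a = 0) = {0} := by
      ext a; by_cases h : a = 0 <;> simp [par, h]
    rw [hf, Finset.sum_singleton]
    simp [w]
  · have hf : Finset.univ.filter (fun a : Xc n => par n a = 1)
        = Finset.univ \ {(0 : Xc n)} := by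
      ext a; by_cases h : a = 0 <;> simp [par, h]
    have hcard : (Finset.univ \ {(0 : Xc n)}).card = 5 ^ (n+1) := by
      rw [Finset.card_sdiff_of_subset (Finset.subset_univ _), Finset.card_univ, Finset.card_singleton]
      simp
    rw [hf, Finset.sum_congr rfl (fun a ha => show w n a = 1 / (2 * 5 ^ (n+1)) by
        rw [w, if_neg (by simpa using (Finset.mem_sdiff.1 ha).2)]),
      Finset.sum_const, hcard, nsmul_eq_mul]
    have h5 : ((5:ℝ≥0∞) ^ (n+1)) ≠ 0 := pow_ne_zero _ (by norm_num)
    have h5' : ((5:ℝ≥0∞) ^ (n+1)) ≠ ⊤ := ENNReal.pow_ne_top (by simp)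
    push_cast
    rw [one_div, ENNReal.mul_inv (Or.inl (by norm_num)) (Or.inl (by simp)), one_div]
    rw [mul_comm (2:ℝ≥0∞)⁻¹ _, ← mul_assoc, ENNReal.mul_inv_cancel h5 h5', one_mul]

lemma two_half : (2 : ℝ≥0∞) * (1/2) = 1 := by
  rw [one_div, ENNReal.mul_inv_cancel two_ne_zero ENNReal.ofNat_ne_top]

/-- extend one coordinate with prescribed parity, at the cost of doubling `ε` -/
lemma parity_fix (hμ : IsProductMeasure μ) {D : Set XX} (hD : MeasurableSet D) {ε : ℝ≥0∞}
    {n : ℕ} {x : XX} (q : ℕ) (hq : q < 2)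
    (h : μ (D ∩ Zc (Finset.range n) x) ≤ ε * μ (Zc (Finset.range n) x)) :
    ∃ a : Xc n, par n a = q ∧
      μ (D ∩ Zc (Finset.range (n+1)) (Function.update x n a))
        ≤ 2 * ε * μ (Zc (Finset.range (n+1)) (Function.update x n a)) := by
  by_contra hcon
  push_neg at hcon
  set F := Finset.univ.filter (fun a : Xc n => par n a = q) with hF
  have hFne : F.Nonempty := by
    interval_cases q
    · exact ⟨0, by simp [hF, par]⟩
    · refine ⟨⟨1, by have : 1 < 5 ^ (n+1) := Nat.one_lt_pow (Nat.succ_ne_zero n) (by norm_num); omega⟩, ?_⟩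
      simp only [hF, Finset.mem_filter, Finset.mem_univ, true_and, par, ite_eq_right_iff]
      intro h0
      exact absurd (congrArg Fin.val h0) (by simp)
  have hchain : ε * μ (Zc (Finset.range n) x) < ε * μ (Zc (Finset.range n) x) := by
    calc ε * μ (Zc (Finset.range n) x)
        = ∑ a ∈ F, 2 * ε * μ (Zc (Finset.range (n+1)) (Function.update x n a)) := by
          rw [Finset.sum_congr rfl fun a _ => by
            rw [mu_Zc_succ hμ n x a, show 2 * ε * (μ (Zc (Finset.range n) x) * w n a)
              = 2 * ε * μ (Zc (Finset.range n) x) * w n a by ring]]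
          rw [← Finset.mul_sum, sum_w_parity n q hq,
            show 2 * ε * μ (Zc (Finset.range n) x) * (1/2)
              = 2 * (1/2) * (ε * μ (Zc (Finset.range n) x)) by ring, two_half, one_mul]
      _ < ∑ a ∈ F, μ (D ∩ Zc (Finset.range (n+1)) (Function.update x n a)) := by
          refine ENNReal.sum_lt_sum_of_nonempty hFne fun a ha => ?_
          exact hcon a (Finset.mem_filter.1 ha).2
      _ ≤ ∑ a : Xc n, μ (D ∩ Zc (Finset.range (n+1)) (Function.update x n a)) :=
          Finset.sum_le_sum_of_subset (Finset.filter_subset _ _)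
      _ = μ (D ∩ Zc (Finset.range n) x) := (Zc_succ_decomp μ n x hD).symm
      _ ≤ ε * μ (Zc (Finset.range n) x) := h
  exact lt_irrefl _ hchain

/-- leveling: density can be pushed to any higher level -/
lemma leveling (hμ : IsProductMeasure μ) {D : Set XX} (hD : MeasurableSet D) {ε : ℝ≥0∞}
    {n m : ℕ} (hnm : n ≤ m) {x : XX}
    (h : μ (D ∩ Zc (Finset.range n) x) ≤ ε * μ (Zc (Finset.range n) x)) :
    ∃ x', μ (D ∩ Zc (Finset.range m) x') ≤ ε * μ (Zc (Finset.range m) x') := by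
  induction m, hnm using Nat.le_induction with
  | base => exact ⟨x, h⟩
  | succ m hm ih =>
    obtain ⟨x', hx'⟩ := ih
    obtain ⟨a, ha⟩ := level_step hμ hD hx'
    exact ⟨Function.update x' m a, ha⟩


/-- every set of positive measure has a point cylinder in which it has density `≥ 7/8` -/
lemma density (hμ : IsProductMeasure μ) {C : Set XX} (hC : MeasurableSet C) (hC0 : μ C ≠ 0) :
    ∃ n x, 1 ≤ n ∧
      μ (Cᶜ ∩ Zc (Finset.range n) x) ≤ (1/8) * μ (Zc (Finset.range n) x) := by
  haveI : IsProbabilityMeasure μ := isProb hμ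
  by_contra hcon
  push_neg at hcon
  set a : ℝ := (μ C).toReal with ha
  have ha0 : 0 < a := ENNReal.toReal_pos hC0 (measure_ne_top μ C)
  set δ : ℝ := a / 25 with hδ
  have hδ0 : 0 < δ := by positivity
  have halg : IsSetAlgebra (measurableCylinders Xc) :=
    ⟨empty_mem_measurableCylinders Xc, fun s hs => compl_mem_measurableCylinders hs,
      fun s t hs ht => union_mem_measurableCylinders hs ht⟩
  have hdense := Measure.MeasureDense.of_generateFrom_isSetAlgebra_finite (μ := μ) halg
    generateFrom_measurableCylinders.symm
  obtain ⟨t, ht, htlt⟩ := hdense.approx C hC (measure_ne_top μ C) δ hδ0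
  obtain ⟨Γ, S, hmS, rfl⟩ := (mem_measurableCylinders t).1 ht
  have hcyl : cylinder Γ S = cylSet Γ S := rfl
  have htmeas : MeasurableSet (cylinder Γ S) := hcyl ▸ measurableSet_cylSet Γ S
  set n : ℕ := Γ.sup id + 1 with hn
  have hn1 : 1 ≤ n := Nat.le_add_left 1 _
  have hΓn : ∀ i ∈ Γ, i < n := fun i hi => Nat.lt_succ_of_le (Finset.le_sup (f := id) hi)
  -- dichotomy: the cylinder `t` is a union of level-`n` point cylinders
  have hdich : ∀ c : (i : (Finset.range n : Finset ℕ)) → Xc i,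
      cylinder Γ S ∩ cylPt (Finset.range n) c = cylPt (Finset.range n) c
      ∨ cylinder Γ S ∩ cylPt (Finset.range n) c = ∅ := by
    intro c
    by_cases hne : (cylinder Γ S ∩ cylPt (Finset.range n) c).Nonempty
    · left
      obtain ⟨z, hz1, hz2⟩ := hne
      refine Set.inter_eq_self_of_subset_right fun z' hz' => ?_
      rw [cylPt_eq_Zc, mem_Zc] at hz2 hz'
      have hzz : (fun i : Γ => z' i) = (fun i : Γ => z i) := funext fun i => by
        have him : (i : ℕ) ∈ Finset.range n := Finset.mem_range.2 (hΓn i i.2)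
        rw [hz' i him, hz2 i him]
      show (fun i : Γ => z' i) ∈ S
      rw [hzz]
      exact hz1
    · right; exact Set.not_nonempty_iff_eq_empty.1 hne
  -- main estimate: `Cᶜ` has density `≥ 1/8` in `t`
  have hmain : (1/8) * μ (cylinder Γ S) ≤ μ (Cᶜ ∩ cylinder Γ S) := by
    have e1 : μ (Cᶜ ∩ cylinder Γ S)
        = ∑ c : (i : (Finset.range n : Finset ℕ)) → Xc i,
            μ (Cᶜ ∩ (cylinder Γ S ∩ cylPt (Finset.range n) c)) := by
      rw [measure_eq_sum_cyl μ (Finset.range n) (hC.compl.inter htmeas)]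
      exact Finset.sum_congr rfl fun c _ => by rw [Set.inter_assoc]
    have e2 : μ (cylinder Γ S)
        = ∑ c : (i : (Finset.range n : Finset ℕ)) → Xc i,
            μ (cylinder Γ S ∩ cylPt (Finset.range n) c) :=
      measure_eq_sum_cyl μ (Finset.range n) htmeas
    rw [e1, e2, Finset.mul_sum]
    refine Finset.sum_le_sum fun c _ => ?_
    rcases hdich c with h | h
    · rw [h, cylPt_eq_Zc]
      exact le_of_lt (hcon n (extc (Finset.range n) c) hn1)
    · rw [h]; simp
  -- numeric contradiction
  set d : ℝ≥0∞ := ENNReal.ofReal δ with hd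
  have hb1 : μ (Cᶜ ∩ cylinder Γ S) ≤ μ (symmDiff C (cylinder Γ S)) := by
    refine measure_mono fun z hz => ?_
    rw [Set.symmDiff_def]
    exact Or.inr ⟨hz.2, fun hzC => hz.1 hzC⟩
  have hb2 : μ C ≤ μ (cylinder Γ S) + d := by
    calc μ C ≤ μ ((C ∩ cylinder Γ S) ∪ (symmDiff C (cylinder Γ S))) := by
          refine measure_mono fun z hz => ?_
          by_cases hzt : z ∈ cylinder Γ S
          · exact Or.inl ⟨hz, hzt⟩
          · exact Or.inr (by rw [Set.symmDiff_def]; exact Or.inl ⟨hz, hzt⟩)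
      _ ≤ μ (C ∩ cylinder Γ S) + μ (symmDiff C (cylinder Γ S)) := measure_union_le _ _
      _ ≤ μ (cylinder Γ S) + d :=
          add_le_add (measure_mono Set.inter_subset_right) htlt.le
  have hfinal : (1/8) * (μ C - d) < d := by
    have h1 : (1/8) * (μ C - d) ≤ (1/8) * μ (cylinder Γ S) := by
      exact mul_le_mul_right (tsub_le_iff_right.2 hb2) _
    calc (1/8) * (μ C - d) ≤ (1/8) * μ (cylinder Γ S) := h1
      _ ≤ μ (Cᶜ ∩ cylinder Γ S) := hmain
      _ ≤ μ (symmDiff C (cylinder Γ S)) := hb1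
      _ < d := htlt
  -- translate to reals
  have hdle : d ≤ μ C := by
    rw [hd, ← ENNReal.ofReal_toReal (measure_ne_top μ C), ← ha]
    exact ENNReal.ofReal_le_ofReal (by rw [hδ]; linarith)
  have hreal : (1/8 : ℝ) * (a - δ) < δ := by
    have := ENNReal.toReal_strict_mono ENNReal.ofReal_ne_top hfinal
    rw [ENNReal.toReal_mul, ENNReal.toReal_sub_of_le hdle (measure_ne_top μ C),
      ENNReal.toReal_ofReal hδ0.le, ← ha] at this
    convert this using 2
    rw [one_div, one_div, ENNReal.toReal_inv]
    norm_num
  rw [hδ] at hreal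
  linarith

lemma two_eighth : (2:ℝ≥0∞) * (1/8) = 1/4 := by
  rw [one_div, one_div, show (8:ℝ≥0∞) = 2 * 4 by norm_num,
    ENNReal.mul_inv (by simp) (by simp), ← mul_assoc,
    ENNReal.mul_inv_cancel two_ne_zero ENNReal.ofNat_ne_top, one_mul]

lemma quarter_add : (1/4 : ℝ≥0∞) + 1/4 = 1/2 := by
  rw [← two_mul, one_div, one_div, show (4:ℝ≥0∞) = 2 * 2 by norm_num,
    ENNReal.mul_inv (by simp) (by simp), ← mul_assoc,
    ENNReal.mul_inv_cancel two_ne_zero ENNReal.ofNat_ne_top, one_mul]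

lemma pS_lt_two (n : ℕ) (x : XX) : pS n x < 2 := Nat.mod_lt _ (by norm_num)

end S14

theorem statement14 (μ : Measure XX) (hμ : IsProductMeasure μ)
    (A : Set XX) (hA : MeasurableSet A)
    (hinv : ∀ x ∈ A, ∀ y : XX, Rrel x y → y ∈ A) :
    μ A = 0 ∨ μ Aᶜ = 0 := by
  open S14 in
  by_cases h0 : μ A = 0
  · exact Or.inl h0
  refine Or.inr (by_contra fun hc0 => ?_)
  obtain ⟨n, x, hn, hx⟩ := S14.density hμ hA h0
  obtain ⟨m, y, hm, hy⟩ := S14.density hμ hA.compl hc0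
  rw [compl_compl] at hy
  set N := max n m with hN
  obtain ⟨x', hx'⟩ := S14.leveling hμ hA.compl (le_max_left n m) hx
  obtain ⟨y', hy'⟩ := S14.leveling hμ hA (le_max_right n m) hy
  obtain ⟨a, hpa, hxa⟩ := S14.parity_fix hμ hA.compl (S14.pS N y') (S14.pS_lt_two N y') hx'
  obtain ⟨b, hpb, hyb⟩ := S14.parity_fix hμ hA (S14.pS N x') (S14.pS_lt_two N x') hy'
  set X2 : XX := Function.update x' N a with hX2
  set Y2 : XX := Function.update y' N b with hY2
  have hpar : S14.pS (N+1) X2 = S14.pS (N+1) Y2 := by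
    rw [hX2, hY2, S14.pS_succ, S14.pS_succ, hpa, hpb, Nat.add_comm]
  rw [S14.two_eighth] at hxa hyb
  set R := Finset.range (N+1) with hR
  set P := μ (S14.Zc R X2) with hP
  set Q := μ (S14.Zc R Y2) with hQ
  have hP0 : P ≠ 0 := S14.mu_Zc_ne_zero hμ R X2
  have hPt : P ≠ ⊤ := S14.mu_Zc_ne_top hμ R X2
  have hQ0 : Q ≠ 0 := S14.mu_Zc_ne_zero hμ R Y2
  have hQt : Q ≠ ⊤ := S14.mu_Zc_ne_top hμ R Y2
  have hKI := S14.KI hμ hA hinv (Nat.le_add_left 1 N) hpar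
  -- here hKI : μ (A ∩ Zc R X2) * Q ≤ μ (A ∩ Zc R Y2) * P
  have hdec : μ (A ∩ S14.Zc R X2) + μ (Aᶜ ∩ S14.Zc R X2) = P := by
    rw [Set.inter_comm A, ← Set.diff_eq_compl_inter]
    exact measure_inter_add_diff _ hA
  have hchain : P * Q < P * Q := by
    calc P * Q = μ (A ∩ S14.Zc R X2) * Q + μ (Aᶜ ∩ S14.Zc R X2) * Q := by
          rw [← add_mul, hdec]
      _ ≤ μ (A ∩ S14.Zc R Y2) * P + ((1/4) * P) * Q := by
          exact add_le_add hKI (mul_le_mul_left hxa _)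
      _ ≤ ((1/4) * Q) * P + ((1/4) * P) * Q := by
          exact add_le_add_left (mul_le_mul_left hyb _) _
      _ = (1/2) * (P * Q) := by rw [← S14.quarter_add]; ring
      _ < P * Q := by
          rw [show (1/2) * (P * Q) = (P * Q) / 2 by
            rw [one_div, div_eq_mul_inv]; exact mul_comm _ _]
          exact ENNReal.half_lt_self (mul_ne_zero hP0 hQ0) (ENNReal.mul_ne_top hPt hQt)
  exact lt_irrefl _ hchain
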